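/- Let α ∈ ℂ, x = |α|², and define v : ℕ → ℂ by v_0 = 0 and v_n = e^{-x/2} √n · α^{n-1}/√((n-1)!) for n ≥ 1 (the unnormalized photon-added coherent state â†|α⟩), and Ψ : ℕ × ℕ → ℂ by Ψ(n,m) = v_n·[m=0] + [n=0]·v_m (the unnormalized photon-added coherent NOON state). Then the Bell correlator E := (4|Ψ(0,0)|² − 2·Σ_{m}|Ψ(0,m)|² − 2·Σ_{n}|Ψ(n,0)|² + Σ_{(n,m)}|Ψ(n,m)|²) / (Σ_{(n,m)}|Ψ(n,m)|²) equals −1, for every α ∈ ℂ. -/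

import Mathlib

open scoped BigOperators

/-- The reference-frame-independent Bell correlator `⟨M₀ᴬ M₀ᴮ⟩` of the
photon-added coherent NOON state equals `−1` for every amplitude `α`. -/
theorem photon_added_coherent_NOON_bell_correlator
    (α : ℂ) (x : ℝ) (hx : x = ‖α‖ ^ 2)
    (v : ℕ → ℂ) (hv0 : v 0 = 0)
    (hv : ∀ n : ℕ, 1 ≤ n → v n =
      ((Real.exp (-x / 2) : ℝ) : ℂ) * ((Real.sqrt n : ℝ) : ℂ) * α ^ (n - 1) /
        ((Real.sqrt (Nat.factorial (n - 1)) : ℝ) : ℂ))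
    (Ψ : ℕ × ℕ → ℂ)
    (hΨ : ∀ n m : ℕ, Ψ (n, m) =
      v n * (if m = 0 then 1 else 0) + (if n = 0 then 1 else 0) * v m)
    (E : ℝ)
    (hE : E = (4 * ‖Ψ (0, 0)‖ ^ 2
        - 2 * ∑' m : ℕ, ‖Ψ (0, m)‖ ^ 2
        - 2 * ∑' n : ℕ, ‖Ψ (n, 0)‖ ^ 2
        + ∑' p : ℕ × ℕ, ‖Ψ p‖ ^ 2) /
      ∑' p : ℕ × ℕ, ‖Ψ p‖ ^ 2) :
    E = -1 := by
  set f : ℕ → ℝ := fun n => ‖v n‖ ^ 2 with hf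
  have hf0 : f 0 = 0 := by simp [hf, hv0]
  have hfnn : ∀ n, 0 ≤ f n := fun n => by positivity
  -- explicit formula for f (n+1)
  have hfs : ∀ n : ℕ, f (n + 1) = Real.exp (-x) * ((n + 1) * x ^ n / Nat.factorial n) := by
    intro n
    have h := hv (n + 1) (Nat.le_add_left 1 n)
    simp only [Nat.add_sub_cancel] at h
    have habs : ‖v (n + 1)‖ =
        Real.exp (-x / 2) * Real.sqrt (n + 1) * ‖α‖ ^ n /
          Real.sqrt (Nat.factorial n) := by
      rw [h, norm_div, norm_mul, norm_mul, norm_pow,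
        Complex.norm_of_nonneg (Real.exp_pos _).le, Complex.norm_of_nonneg (Real.sqrt_nonneg _),
        Complex.norm_of_nonneg (Real.sqrt_nonneg _)]
      push_cast
      ring
    have e1 : Real.exp (-x / 2) ^ 2 = Real.exp (-x) := by
      rw [sq, ← Real.exp_add]; ring_nf
    have e2 : Real.sqrt ((n : ℝ) + 1) ^ 2 = (n : ℝ) + 1 := Real.sq_sqrt (by positivity)
    have e3 : Real.sqrt (Nat.factorial n) ^ 2 = (Nat.factorial n : ℝ) :=
      Real.sq_sqrt (by positivity)
    have e4 : (‖α‖ ^ n) ^ 2 = x ^ n := by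
      rw [← pow_mul, mul_comm, pow_mul, ← hx]
    rw [hf]
    simp only [habs, div_pow, mul_pow, e1, e2, e3, e4]
    ring
  -- summability of f
  have hF : Summable (fun n => x ^ n / Nat.factorial n) := Real.summable_pow_div_factorial x
  have hsumf : Summable f := by
    rw [← summable_nat_add_iff 2]
    have : (fun n => f (n + 2)) = fun n =>
        Real.exp (-x) * (x ^ (n + 1) / Nat.factorial (n + 1)) +
        Real.exp (-x) * x * (x ^ n / Nat.factorial n) := by
      funext n
      rw [show n + 2 = (n + 1) + 1 by ring, hfs (n + 1)]
      have h1 : (Nat.factorial (n + 1) : ℝ) = (n + 1) * Nat.factorial n := by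
        rw [Nat.factorial_succ]; push_cast; ring
      have h2 : (Nat.factorial n : ℝ) ≠ 0 := by positivity
      rw [h1]
      field_simp
      push_cast
      ring
    rw [this]
    exact ((hF.comp_injective (add_left_injective 1)).mul_left _).add
      ((hF.mul_left _))
  set T : ℝ := ∑' n, f n with hT
  have hTpos : 0 < T := by
    have h1 : f 1 ≤ T := Summable.le_tsum hsumf 1 (fun j _ => hfnn j)
    have : f 1 = Real.exp (-x) := by
      rw [hfs 0]; simp
    nlinarith [Real.exp_pos (-x)]
  -- values of Ψ
  have hΨ00 : Ψ (0, 0) = 0 := by rw [hΨ 0 0, hv0]; simp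
  have hΨ0m : ∀ m, Ψ (0, m) = v m := by
    intro m
    rw [hΨ 0 m, hv0]
    rcases eq_or_ne m 0 with h | h <;> simp [h, hv0]
  have hΨn0 : ∀ n, Ψ (n, 0) = v n := by
    intro n
    rw [hΨ n 0, hv0]
    rcases eq_or_ne n 0 with h | h <;> simp [h, hv0]
  -- the 2D function decomposes
  have hg : (fun p : ℕ × ℕ => ‖Ψ p‖ ^ 2) = fun p =>
      (if p.2 = 0 then f p.1 else 0) + (if p.1 = 0 then f p.2 else 0) := by
    funext p
    obtain ⟨n, m⟩ := p
    rcases eq_or_ne n 0 with hn | hn <;> rcases eq_or_ne m 0 with hm | hm <;>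
      simp [hn, hm, hΨ00, hΨ0m, hΨn0, hf0, hΨ, hf, hv0]
  -- summability of the two pieces
  have hinj1 : Function.Injective (fun n : ℕ => ((n, 0) : ℕ × ℕ)) := by
    intro a b h; simpa using h
  have hinj2 : Function.Injective (fun n : ℕ => ((0, n) : ℕ × ℕ)) := by
    intro a b h; simpa using h
  have hsupp1 : ∀ p : ℕ × ℕ, p ∉ Set.range (fun n : ℕ => ((n, 0) : ℕ × ℕ)) →
      (if p.2 = 0 then f p.1 else 0) = 0 := by
    intro p hp
    rcases eq_or_ne p.2 0 with h | h
    · exact absurd ⟨p.1, by simp [Prod.ext_iff, h.symm]⟩ hp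
    · simp [h]
  have hsupp2 : ∀ p : ℕ × ℕ, p ∉ Set.range (fun n : ℕ => ((0, n) : ℕ × ℕ)) →
      (if p.1 = 0 then f p.2 else 0) = 0 := by
    intro p hp
    rcases eq_or_ne p.1 0 with h | h
    · exact absurd ⟨p.2, by simp [Prod.ext_iff, h.symm]⟩ hp
    · simp [h]
  have hs1 : Summable (fun p : ℕ × ℕ => if p.2 = 0 then f p.1 else 0) := by
    rw [← hinj1.summable_iff hsupp1]
    simpa [Function.comp_def] using hsumf
  have hs2 : Summable (fun p : ℕ × ℕ => if p.1 = 0 then f p.2 else 0) := by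
    rw [← hinj2.summable_iff hsupp2]
    simpa [Function.comp_def] using hsumf
  have ht1 : ∑' p : ℕ × ℕ, (if p.2 = 0 then f p.1 else 0) = T := by
    rw [← hinj1.tsum_eq (by
      intro p hp
      by_contra h
      exact hp (hsupp1 p (by simpa [Function.support] using h)) )]
    · simp [hT]
  have ht2 : ∑' p : ℕ × ℕ, (if p.1 = 0 then f p.2 else 0) = T := by
    rw [← hinj2.tsum_eq (by
      intro p hp
      by_contra h
      exact hp (hsupp2 p (by simpa [Function.support] using h)) )]
    · simp [hT]
  -- compute the tsums appearing in E
  have hrow : (∑' m : ℕ, ‖Ψ (0, m)‖ ^ 2) = T := by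
    rw [hT]; congr 1; funext m; rw [hΨ0m]
  have hcol : (∑' n : ℕ, ‖Ψ (n, 0)‖ ^ 2) = T := by
    rw [hT]; congr 1; funext n; rw [hΨn0]
  have htot : (∑' p : ℕ × ℕ, ‖Ψ p‖ ^ 2) = 2 * T := by
    rw [hg, Summable.tsum_add hs1 hs2, ht1, ht2]; ring
  rw [hE, hΨ00, hrow, hcol, htot]
  have h2T : (2 : ℝ) * T ≠ 0 := by positivity
  field_simp
  rw [norm_zero]; ring
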